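/- arXiv:2508.16782 — 8 statements merged into one kernel-verified Lean document; each statement's English description precedes it below -/
import Mathlib

section
/- Let P be a ground normal program over a type A of atoms and let (Snf, St) be a pair of subsets of A such that: (1) for every clause (h, pos, neg) ∈ P, if pos ⊆ St and neg ∩ Snf = ∅ then h ∈ St; and (2) every atom a ∈ Snf is covered by P w.r.t. (Snf, St), i.e. there is a clause (a, pos, neg) ∈ P with pos ⊆ Snf and neg ∩ St = ∅. Let (T*, F*) be the Fitting model of P (the least fixed point of the Fitting operator Φ_P). Then T* ⊆ St and F* ∩ Snf = ∅. -/
/-- The Fitting operator `Φ_P` of a ground normal program `P` (a clause is a triple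
`(h, pos, neg)` of a head and the finite sets of atoms occurring positively resp.
negatively in the body).  It maps a pair `(T, F)` of sets of atoms to `(T₁, F₁)` where
`T₁` is the set of heads of clauses whose positive body is contained in `T` and whose
negative body is contained in `F`, and `F₁` is the set of atoms `a` such that every
clause with head `a` has a positive body atom in `F` or a negative body atom in `T`. -/
def fitting {A : Type*} (P : Set (A × Finset A × Finset A)) (TF : Set A × Set A) :
    Set A × Set A :=
  ({h | ∃ pos neg : Finset A, (h, pos, neg) ∈ P ∧ ↑pos ⊆ TF.1 ∧ ↑neg ⊆ TF.2},
   {a | ∀ pos neg : Finset A, (a, pos, neg) ∈ P →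
      (↑pos ∩ TF.2 : Set A) ≠ ∅ ∨ (↑neg ∩ TF.1 : Set A) ≠ ∅})

theorem fitting_mono {A : Type*} (P : Set (A × Finset A × Finset A)) :
    Monotone (fitting P) := by
  intro x y hxy
  constructor
  · rintro h ⟨pos, neg, hP, hpos, hneg⟩
    exact ⟨pos, neg, hP, hpos.trans hxy.1, hneg.trans hxy.2⟩
  · intro a ha pos neg hP
    rcases ha pos neg hP with h | h
    · left
      rw [← Set.nonempty_iff_ne_empty] at h ⊢
      exact h.mono (Set.inter_subset_inter_right _ hxy.2)
    · right
      rw [← Set.nonempty_iff_ne_empty] at h ⊢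
      exact h.mono (Set.inter_subset_inter_right _ hxy.1)

/-- Theorem 1 of the paper (correctness under Kunen/Fitting semantics), for ground
programs: if (1) every clause whose positive body is in `St` and whose negative body is
disjoint from `Snf` has its head in `St`, and (2) every atom of `Snf` is covered by `P`
w.r.t. `(Snf, St)`, then the Fitting model `(T*, F*)` (the least fixed point of `Φ_P`)
satisfies `T* ⊆ St` and `F* ∩ Snf = ∅`. -/
theorem fitting_model_correct {A : Type*} (P : Set (A × Finset A × Finset A))
    (Snf St : Set A)
    (h1 : ∀ h pos neg, (h, pos, neg) ∈ P → ↑pos ⊆ St → (↑neg ∩ Snf : Set A) = ∅ →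
      h ∈ St)
    (h2 : ∀ a ∈ Snf, ∃ pos neg : Finset A, (a, pos, neg) ∈ P ∧ ↑pos ⊆ Snf ∧
      (↑neg ∩ St : Set A) = ∅)
    (TF : Set A × Set A)
    (hTF : IsLeast {x | fitting P x = x} TF) :
    TF.1 ⊆ St ∧ TF.2 ∩ Snf = ∅ := by
  set f : (Set A × Set A) →o (Set A × Set A) := ⟨fitting P, fitting_mono P⟩ with hf
  have hfix : fitting P (OrderHom.lfp f) = OrderHom.lfp f := OrderHom.map_lfp f
  have hle : TF ≤ OrderHom.lfp f := hTF.2 hfix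
  have hpre : fitting P (St, Snfᶜ) ≤ (St, Snfᶜ) := by
    constructor
    · rintro h ⟨pos, neg, hP, hpos, hneg⟩
      refine h1 h pos neg hP hpos ?_
      rw [Set.eq_empty_iff_forall_notMem]
      rintro a ⟨hn, hs⟩
      exact hneg hn hs
    · intro a ha haSnf
      obtain ⟨pos, neg, hP, hpos, hnegSt⟩ := h2 a haSnf
      rcases ha pos neg hP with h | h
      · apply h
        rw [Set.eq_empty_iff_forall_notMem]
        rintro x ⟨hx1, hx2⟩
        exact hx2 (hpos hx1)
      · exact h hnegSt
  have hlfp : OrderHom.lfp f ≤ (St, Snfᶜ) := OrderHom.lfp_le f hpre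
  constructor
  · exact fun a haT => hlfp.1 (hle.1 haT)
  · rw [Set.eq_empty_iff_forall_notMem]
    rintro a ⟨hF, hS⟩
    exact hlfp.2 (hle.2 hF) hS
end

section
/- Let P be a ground normal program over a type A of atoms and let (Snf, St) be a pair of subsets of A such that: (1) for every clause (h, pos, neg) ∈ P, if pos ⊆ St and neg ∩ Snf = ∅ then h ∈ St; and (2) there is a function |·| : Snf → W into a set W with a well-founded order ≺ such that for each a ∈ Snf there exists a clause (a, pos, neg) ∈ P with pos ⊆ Snf, neg ∩ St = ∅, and |b| ≺ |a| for every b ∈ pos. Then the well-founded model of P is correct w.r.t. (Snf, St): lfp(Γ_P²) ⊆ St, and Snf ⊆ gfp(Γ_P²) (i.e. no atom of Snf is false in the well-founded model). -/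
/-- Immediate consequence operator of a ground positive program. -/
def Tq {A : Type*} (Q : Set (A × Finset A)) : Set A →o Set A where
  toFun J := {h | ∃ pos : Finset A, (h, pos) ∈ Q ∧ ↑pos ⊆ J}
  monotone' := by
    intro J K hJK h hh
    obtain ⟨pos, hm, hs⟩ := hh
    exact ⟨pos, hm, hs.trans hJK⟩

/-- Least Herbrand model of a ground positive program. -/
def leastModel {A : Type*} (Q : Set (A × Finset A)) : Set A := OrderHom.lfp (Tq Q)

/-- Gelfond–Lifschitz reduct of a ground normal program relative to `I`. -/
def reduct {A : Type*} (P : Set (A × Finset A × Finset A)) (I : Set A) :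
    Set (A × Finset A) :=
  {c | ∃ neg : Finset A, (c.1, c.2, neg) ∈ P ∧ (↑neg ∩ I : Set A) = ∅}

/-- Gelfond–Lifschitz operator `Γ_P`. -/
def gamma {A : Type*} (P : Set (A × Finset A × Finset A)) (I : Set A) : Set A :=
  leastModel (reduct P I)

theorem gamma_antitone {A : Type*} (P : Set (A × Finset A × Finset A)) :
    Antitone (gamma P) := by
  intro I I' hII'
  apply OrderHom.lfp.monotone
  intro J h hh
  obtain ⟨pos, ⟨neg, hm, hneg⟩, hs⟩ := hh
  refine ⟨pos, ⟨neg, hm, ?_⟩, hs⟩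
  apply Set.eq_empty_of_subset_empty
  rw [← hneg]
  exact Set.inter_subset_inter_right _ hII'

/-- The squared Gelfond–Lifschitz operator `Γ_P²`, which is monotone.
An atom is true in the well-founded model of `P` iff it is in `lfp (Γ_P²)`,
and false iff it is not in `gfp (Γ_P²)`. -/
def gammaSq {A : Type*} (P : Set (A × Finset A × Finset A)) : Set A →o Set A where
  toFun I := gamma P (gamma P I)
  monotone' := fun _ _ h => gamma_antitone P (gamma_antitone P h)

/-- Theorem 3 of the paper (correctness under the well-founded semantics), for ground
programs: if (1) every clause whose positive body is contained in `St` and whose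
negative body is disjoint from `Snf` has its head in `St`, and (2) there is a level
mapping `lvl : Snf → W` into a well-founded order such that every `a ∈ Snf` is covered
by a clause of `P` whose positive body atoms lie in `Snf` with strictly smaller level
and whose negative body is disjoint from `St`, then the well-founded model of `P` is
correct w.r.t. `(Snf, St)`: `lfp (Γ_P²) ⊆ St` and `Snf ⊆ gfp (Γ_P²)`. -/
theorem wf_model_correct {A : Type*} (P : Set (A × Finset A × Finset A))
    (Snf St : Set A)
    (h1 : ∀ h pos neg, (h, pos, neg) ∈ P → ↑pos ⊆ St → (↑neg ∩ Snf : Set A) = ∅ →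
      h ∈ St)
    (W : Type*) (r : W → W → Prop) (hr : WellFounded r)
    (lvl : {a : A // a ∈ Snf} → W)
    (h2 : ∀ a, ∀ ha : a ∈ Snf, ∃ pos neg : Finset A, (a, pos, neg) ∈ P ∧
      (↑neg ∩ St : Set A) = ∅ ∧
      ∃ hpos : ∀ b ∈ pos, b ∈ Snf,
        ∀ b, ∀ hb : b ∈ pos, r (lvl ⟨b, hpos b hb⟩) (lvl ⟨a, ha⟩)) :
    OrderHom.lfp (gammaSq P) ⊆ St ∧ Snf ⊆ OrderHom.gfp (gammaSq P) := by
  -- Claim A: Snf ⊆ gamma P St, by well-founded induction on the level.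
  have claimA : Snf ⊆ gamma P St := by
    have key : ∀ w : W, ∀ a, ∀ ha : a ∈ Snf, lvl ⟨a, ha⟩ = w → a ∈ gamma P St := by
      intro w
      induction w using hr.induction with
      | _ w ih =>
        intro a ha hlvl
        obtain ⟨pos, neg, hmem, hnegSt, hpos, hlt⟩ := h2 a ha
        have hfix : Tq (reduct P St) (gamma P St) = gamma P St :=
          OrderHom.map_lfp (Tq (reduct P St))
        show a ∈ gamma P St
        rw [← hfix]
        refine ⟨pos, ⟨neg, hmem, hnegSt⟩, ?_⟩
        intro b hb
        have hb' : b ∈ pos := hb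
        exact ih _ (hlvl ▸ hlt b hb') b (hpos b hb') rfl
    intro a ha
    exact key _ a ha rfl
  -- Claim B: if Snf ⊆ I then gamma P I ⊆ St.
  have claimB : ∀ I : Set A, Snf ⊆ I → gamma P I ⊆ St := by
    intro I hSI
    refine OrderHom.lfp_le _ ?_
    intro h hh
    obtain ⟨pos, ⟨neg, hmem, hnegI⟩, hs⟩ := hh
    refine h1 h pos neg hmem hs ?_
    apply Set.eq_empty_of_subset_empty
    rw [← hnegI]
    exact Set.inter_subset_inter_right _ hSI
  have hSq : gammaSq P St ⊆ St := claimB _ claimA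
  constructor
  · exact OrderHom.lfp_le _ hSq
  · have hpost : gamma P St ≤ gammaSq P (gamma P St) := by
      have : gamma P (gamma P St) ⊆ St := claimB _ claimA
      exact gamma_antitone P this
    exact claimA.trans (OrderHom.le_gfp _ hpost)
end

section
/- Let P be a ground normal program over a type A of atoms and let (Snf, St) be a pair of subsets of A satisfying the correctness condition: for every clause (h, pos, neg) ∈ P, if pos ⊆ St and neg ∩ Snf = ∅ then h ∈ St. Then for every stable model I of P, if Snf ⊆ I then I ⊆ St. -/
/-- Proposition 1 of the paper: if every clause of `P` whose positive body atoms are in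
`St` and whose negative body atoms avoid `Snf` has its head in `St`, then every stable
model `I` of `P` (i.e. `I = M_{H(P,I)}`) with `Snf ⊆ I` satisfies `I ⊆ St`. -/
theorem stable_model_correct {A : Type*} (P : Set (A × Finset A × Finset A))
    (Snf St : Set A)
    (h1 : ∀ h pos neg, (h, pos, neg) ∈ P → ↑pos ⊆ St → (↑neg ∩ Snf : Set A) = ∅ →
      h ∈ St)
    (I : Set A) (hI : I = leastModel (reduct P I)) (hSnf : Snf ⊆ I) :
    I ⊆ St := by
  rw [hI]
  apply OrderHom.lfp_le
  intro h hh
  obtain ⟨pos, ⟨neg, hm, hneg⟩, hs⟩ := hh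
  refine h1 h pos neg hm hs ?_
  have : (↑neg ∩ Snf : Set A) ⊆ (↑neg ∩ I : Set A) :=
    Set.inter_subset_inter_right _ hSnf
  rw [hneg] at this
  exact Set.subset_empty_iff.mp this
end

section
/- Let t be a term whose set of variables has k ≥ 0 elements, in a first-order language that has at least one constant symbol (so ground terms exist). Let f be a function symbol of arity ≥ 1 that does not occur in t. Then there exists a ground instance tθ of t such that tθ is not unifiable with any term s satisfying both: (i) t is not an instance of s, and (ii) f does not occur in s. -/
/-- Terms of a first-order language with function symbols `F` of arities `ar`
(constants are the symbols of arity 0) and variables `V`. -/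
inductive Term (F : Type*) (ar : F → ℕ) (V : Type*) where
  | var : V → Term F ar V
  | func : (f : F) → (Fin (ar f) → Term F ar V) → Term F ar V

/-- Application of a substitution `θ` (a map from variables to terms) to a term. -/
def Term.subst {F : Type*} {ar : F → ℕ} {V : Type*} (θ : V → Term F ar V) :
    Term F ar V → Term F ar V
  | .var v => θ v
  | .func f args => .func f (fun i => (args i).subst θ)

/-- The variable `v` occurs in the term. -/
inductive Term.VarOccurs {F : Type*} {ar : F → ℕ} {V : Type*} (v : V) :
    Term F ar V → Prop
  | var : Term.VarOccurs v (.var v)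
  | arg {f : F} {args : Fin (ar f) → Term F ar V} (i : Fin (ar f)) :
      Term.VarOccurs v (args i) → Term.VarOccurs v (.func f args)

/-- The function symbol `g` occurs in the term. -/
inductive Term.FuncOccurs {F : Type*} {ar : F → ℕ} {V : Type*} (g : F) :
    Term F ar V → Prop
  | head {args : Fin (ar g) → Term F ar V} : Term.FuncOccurs g (.func g args)
  | arg {f : F} {args : Fin (ar f) → Term F ar V} (i : Fin (ar f)) :
      Term.FuncOccurs g (args i) → Term.FuncOccurs g (.func f args)

/-- A term is ground if no variable occurs in it. -/
def Term.Ground {F : Type*} {ar : F → ℕ} {V : Type*} (t : Term F ar V) : Prop :=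
  ∀ v : V, ¬ t.VarOccurs v

section Aux
variable {F V : Type*} {ar : F → ℕ}

lemma Term.ground_subst {u : Term F ar V} (h : u.Ground) (σ : V → Term F ar V) :
    u.subst σ = u := by
  induction u with
  | var v => exact absurd Term.VarOccurs.var (h v)
  | func g args ih =>
    simp only [Term.subst]
    congr 1
    funext i
    exact ih i (fun v hv => h v (Term.VarOccurs.arg i hv))

lemma Term.subst_ground {θ : V → Term F ar V} (hθ : ∀ v, (θ v).Ground)
    (u : Term F ar V) : (u.subst θ).Ground := by
  induction u with
  | var v => exact hθ v
  | func g args ih =>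
    intro w hw
    cases hw with
    | arg i hi => exact ih i w hi

/-- Tower of `f`'s over the constant `c`. -/
def tower (c f : F) (hc : ar c = 0) : ℕ → Term F ar V
  | 0 => .func c (fun i => (Fin.cast hc i).elim0)
  | n + 1 => .func f (fun _ => tower c f hc n)

lemma tower_ground (c f : F) (hc : ar c = 0) (n : ℕ) :
    (tower c f hc n (V := V)).Ground := by
  induction n with
  | zero => intro v h; cases h with
    | arg i _ => exact (Fin.cast hc i).elim0
  | succ n ih => intro v h; cases h with
    | arg i hi => exact ih v hi

lemma tower_inj {c f : F} (hc : ar c = 0) (hcf : c ≠ f) (hf : 1 ≤ ar f) :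
    ∀ a b : ℕ, tower c f hc a = tower c f hc b (V := V) → a = b := by
  intro a
  induction a with
  | zero =>
    intro b h
    cases b with
    | zero => rfl
    | succ b =>
      exfalso
      simp only [tower] at h
      injection h with h1 _
      exact hcf h1
  | succ a ih =>
    intro b h
    cases b with
    | zero =>
      exfalso
      simp only [tower] at h
      injection h with h1 _
      exact hcf h1.symm
    | succ b =>
      simp only [tower] at h
      injection h with h1 h2
      have h3 := congrFun h2 (⟨0, hf⟩ : Fin (ar f))
      exact congrArg Nat.succ (ih b h3)

end Aux

/-- The function-symbol case of Lemma 1 of the paper: let `t` be a term with finitely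
many (`k ≥ 0`) variables, in a language with at least one constant, and let `f` be a
function symbol of arity `≥ 1` not occurring in `t`.  Then some ground instance `tθ` of
`t` is not unifiable with any term `s` such that (i) `t` is not an instance of `s` and
(ii) `f` does not occur in `s`. -/
theorem ground_instance_not_unifiable_func {F V : Type*} (ar : F → ℕ)
    (hconst : ∃ c : F, ar c = 0)
    (t : Term F ar V) (k : ℕ)
    (hfin : {v : V | t.VarOccurs v}.Finite)
    (hk : {v : V | t.VarOccurs v}.ncard = k)
    (f : F) (hf : 1 ≤ ar f) (hfnot : ¬ t.FuncOccurs f) :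
    ∃ θ : V → Term F ar V, (t.subst θ).Ground ∧
      ∀ s : Term F ar V,
        (¬ ∃ ρ : V → Term F ar V, s.subst ρ = t) →
        ¬ s.FuncOccurs f →
        ¬ ∃ σ : V → Term F ar V, (t.subst θ).subst σ = s.subst σ := by
  classical
  obtain ⟨c, hc⟩ := hconst
  have hcf : c ≠ f := by intro h; subst h; omega
  haveI : Countable {v : V | t.VarOccurs v} := hfin.countable
  obtain ⟨e, he⟩ := countable_iff_exists_injective {v : V | t.VarOccurs v} |>.mp
    ‹Countable {v : V | t.VarOccurs v}›
  set idx : V → ℕ := fun v => if h : t.VarOccurs v then e ⟨v, h⟩ else 0 with hidx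
  set θ : V → Term F ar V := fun v => tower c f hc (idx v + 1) with hθ
  have hθg : ∀ v, (θ v).Ground := fun v => tower_ground c f hc _
  -- injectivity of θ-substitution on f-free terms with variables in t
  have hinj : ∀ u u' : Term F ar V, ¬u.FuncOccurs f → ¬u'.FuncOccurs f →
      (∀ v, u.VarOccurs v → t.VarOccurs v) → (∀ v, u'.VarOccurs v → t.VarOccurs v) →
      u.subst θ = u'.subst θ → u = u' := by
    intro u
    induction u with
    | var v =>
      intro u' hfu hfu' hv hv' heq
      cases u' with
      | var v' =>
        have h1 : t.VarOccurs v := hv v Term.VarOccurs.var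
        have h2 : t.VarOccurs v' := hv' v' Term.VarOccurs.var
        have : idx v + 1 = idx v' + 1 := tower_inj hc hcf hf _ _ heq
        simp only [hidx, dif_pos h1, dif_pos h2] at this
        have := he (Nat.succ_injective this)
        exact congrArg Term.var (congrArg Subtype.val this)
      | func g args =>
        exfalso
        simp only [Term.subst, hθ, tower] at heq
        injection heq with h1 _
        subst h1
        exact hfu' Term.FuncOccurs.head
    | func g args ih =>
      intro u' hfu hfu' hv hv' heq
      cases u' with
      | var v' =>
        exfalso
        simp only [Term.subst, hθ, tower] at heq
        injection heq with h1 _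
        subst h1
        exact hfu Term.FuncOccurs.head
      | func g' args' =>
        simp only [Term.subst] at heq
        injection heq with h1 h2
        subst h1
        have h3 := eq_of_heq h2
        congr 1
        funext i
        exact ih i (args' i)
          (fun h => hfu (Term.FuncOccurs.arg i h))
          (fun h => hfu' (Term.FuncOccurs.arg i h))
          (fun v h => hv v (Term.VarOccurs.arg i h))
          (fun v h => hv' v (Term.VarOccurs.arg i h))
          (congrFun h3 i)
  refine ⟨θ, Term.subst_ground hθg t, ?_⟩
  rintro s hnotinst hfs ⟨σ, hσ⟩
  rw [Term.ground_subst (Term.subst_ground hθg t) σ] at hσ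
  -- hσ : t.subst θ = s.subst σ
  set ρ : V → Term F ar V := fun x =>
    if h : ∃ u : Term F ar V, (∀ v, u.VarOccurs v → t.VarOccurs v) ∧
        ¬u.FuncOccurs f ∧ σ x = u.subst θ then h.choose else Term.var x with hρ
  have hkey : ∀ s' u : Term F ar V, ¬s'.FuncOccurs f → ¬u.FuncOccurs f →
      (∀ v, u.VarOccurs v → t.VarOccurs v) → s'.subst σ = u.subst θ →
      s'.subst ρ = u := by
    intro s'
    induction s' with
    | var x =>
      intro u hfs' hfu hv heq
      have hex : ∃ u0 : Term F ar V, (∀ v, u0.VarOccurs v → t.VarOccurs v) ∧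
          ¬u0.FuncOccurs f ∧ σ x = u0.subst θ := ⟨u, hv, hfu, heq⟩
      have hspec := hex.choose_spec
      have : ρ x = hex.choose := by simp only [hρ, dif_pos hex]
      rw [show (Term.var x).subst ρ = ρ x from rfl, this]
      exact hinj _ u hspec.2.1 hfu hspec.1 hv (hspec.2.2.symm.trans heq)
    | func g args ih =>
      intro u hfs' hfu hv heq
      cases u with
      | var v =>
        exfalso
        simp only [Term.subst, hθ, tower] at heq
        injection heq with h1 _
        subst h1
        exact hfs' Term.FuncOccurs.head
      | func g' args' =>
        simp only [Term.subst] at heq ⊢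
        injection heq with h1 h2
        subst h1
        have h3 := eq_of_heq h2
        congr 1
        funext i
        exact ih i (args' i)
          (fun h => hfs' (Term.FuncOccurs.arg i h))
          (fun h => hfu (Term.FuncOccurs.arg i h))
          (fun v h => hv v (Term.VarOccurs.arg i h))
          (congrFun h3 i)
  exact hnotinst ⟨ρ, hkey s t hfs hfnot (fun _ h => h) hσ.symm⟩
end

section
/- Let t be a term whose set of variables has k ≥ 0 elements, in a first-order language. Let c₁, …, c_k be pairwise distinct constant symbols, none of which occurs in t. Then there exists a ground instance tθ of t such that tθ is not unifiable with any term s satisfying both: (i) t is not an instance of s, and (ii) none of c₁, …, c_k occurs in s. -/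
open Classical in
noncomputable def deconst {F V : Type*} {ar : F → ℕ} {k : ℕ} (c : Fin k → F) (E : Fin k → V) :
    Term F ar V → Term F ar V
  | .var v => .var v
  | .func f args =>
      if h : ∃ i, f = c i then .var (E h.choose)
      else .func f (fun i => deconst c E (args i))

open Classical in
lemma deconst_func {F V : Type*} {ar : F → ℕ} {k : ℕ} (c : Fin k → F) (E : Fin k → V)
    (f : F) (args : Fin (ar f) → Term F ar V) :
    deconst c E (.func f args) =
      if h : ∃ i, f = c i then (Term.var (E h.choose) : Term F ar V)
      else Term.func f (fun i => deconst c E (args i)) := rfl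

lemma subst_var {F V : Type*} {ar : F → ℕ} (t : Term F ar V) :
    t.subst Term.var = t := by
  induction t with
  | var v => rfl
  | func f args ih => exact congrArg _ (funext ih)

lemma subst_ground {F V : Type*} {ar : F → ℕ} {t : Term F ar V} (h : t.Ground)
    (σ : V → Term F ar V) : t.subst σ = t := by
  induction t with
  | var v => exact absurd .var (h v)
  | func f args ih =>
      exact congrArg _ (funext fun i => ih i (fun v hv => h v (.arg i hv)))

lemma varOccurs_subst {F V : Type*} {ar : F → ℕ} {t : Term F ar V}
    {θ : V → Term F ar V} {v : V} (h : (t.subst θ).VarOccurs v) :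
    ∃ w, t.VarOccurs w ∧ (θ w).VarOccurs v := by
  induction t with
  | var w => exact ⟨w, .var, h⟩
  | func f args ih =>
      cases h with
      | arg i hi => obtain ⟨w, hw, hv⟩ := ih i hi; exact ⟨w, .arg i hw, hv⟩

lemma deconst_subst {F V : Type*} {ar : F → ℕ} {k : ℕ} {c : Fin k → F} {E : Fin k → V}
    {u : Term F ar V} (hc : ∀ i, ¬ u.FuncOccurs (c i)) (σ : V → Term F ar V) :
    deconst c E (u.subst σ) = u.subst (fun v => deconst c E (σ v)) := by
  induction u with
  | var v => rfl
  | func f args ih =>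
      have hf : ¬ ∃ i, f = c i := by
        rintro ⟨i, rfl⟩; exact hc i .head
      classical
      rw [show Term.subst σ (Term.func f args) = Term.func f (fun i => (args i).subst σ) from rfl,
        deconst_func, dif_neg hf]
      
      exact congrArg _ (funext fun i => ih i (fun j hj => hc j (.arg i hj)))

/-- The constants case of Lemma 1 of the paper: let `t` be a term with exactly `k ≥ 0`
variables and let `c₁, …, c_k` be pairwise distinct constants not occurring in `t`.
Then some ground instance `tθ` of `t` is not unifiable with any term `s` such that
(i) `t` is not an instance of `s` and (ii) none of `c₁, …, c_k` occurs in `s`. -/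
theorem ground_instance_not_unifiable_const {F V : Type*} (ar : F → ℕ)
    (t : Term F ar V) (k : ℕ)
    (hfin : {v : V | t.VarOccurs v}.Finite)
    (hk : {v : V | t.VarOccurs v}.ncard = k)
    (c : Fin k → F) (hcar : ∀ i, ar (c i) = 0) (hcinj : Function.Injective c)
    (hcnot : ∀ i, ¬ t.FuncOccurs (c i)) :
    ∃ θ : V → Term F ar V, (t.subst θ).Ground ∧
      ∀ s : Term F ar V,
        (¬ ∃ ρ : V → Term F ar V, s.subst ρ = t) →
        (∀ i, ¬ s.FuncOccurs (c i)) →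
        ¬ ∃ σ : V → Term F ar V, (t.subst θ).subst σ = s.subst σ := by
  classical
  have hcard : hfin.toFinset.card = k := by
    rw [← hk, Set.ncard_eq_toFinset_card _ hfin]
  let eqv : hfin.toFinset ≃ Fin k := hfin.toFinset.equivFinOfCardEq hcard
  let E : Fin k → V := fun i => (eqv.symm i : V)
  let constT : Fin k → Term F ar V := fun j =>
    .func (c j) (fun i => Fin.elim0 (i.cast (hcar j)))
  let θ : V → Term F ar V := fun v =>
    if h : t.VarOccurs v then constT (eqv ⟨v, hfin.mem_toFinset.2 h⟩) else .var v
  have hconstT_ground : ∀ j v, ¬ (constT j).VarOccurs v := by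
    intro j v h
    cases h with
    | arg i hi => exact Fin.elim0 (i.cast (hcar j))
  have hground : (t.subst θ).Ground := by
    intro v hv
    obtain ⟨w, hw, hv'⟩ := varOccurs_subst hv
    simp only [θ, dif_pos hw] at hv'
    exact hconstT_ground _ _ hv'
  refine ⟨θ, hground, ?_⟩
  intro s hinst hcs ⟨σ, hσ⟩
  rw [subst_ground hground σ] at hσ
  apply hinst
  refine ⟨fun v => deconst c E (σ v), ?_⟩
  rw [← deconst_subst hcs σ, ← hσ, deconst_subst hcnot θ]
  have hdθ : ∀ v, deconst c E (θ v) = .var v := by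
    intro v
    by_cases h : t.VarOccurs v
    · simp only [θ, dif_pos h]
      have hex : ∃ i, c (eqv ⟨v, hfin.mem_toFinset.2 h⟩) = c i :=
        ⟨_, rfl⟩
      rw [show constT (eqv ⟨v, hfin.mem_toFinset.2 h⟩) = Term.func (c (eqv ⟨v, hfin.mem_toFinset.2 h⟩)) _ from rfl,
        deconst_func, dif_pos hex]
      have := hcinj hex.choose_spec
      rw [← this]
      show Term.var (E (eqv ⟨v, hfin.mem_toFinset.2 h⟩)) = _
      simp [E]
    · simp only [θ, dif_neg h]; rfl
  calc t.subst (fun v => deconst c E (θ v)) = t.subst Term.var :=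
        congrArg (fun f => Term.subst f t) (funext hdθ)
    _ = t := subst_var t
end

section
/- Let U be the inductive type with constructors nil : U, cons : U → U → U, and const : K → U for an arbitrary index type K (the Herbrand universe of a language with the list constructors and possibly further constants). Define isList : U → Prop inductively by: isList nil, and isList (cons h t) whenever isList t; define membership mem e u by: mem e (cons h t) iff e = h or mem e t (and mem e u is false otherwise). Let the atom type be A = U × U, an atom (e, u) being written m(e, u). Consider the ground positive program M consisting of: the facts (m(e, cons e t), ∅) for all e, t ∈ U, and the clauses (m(e, cons h t), {m(e, t)}) for all e, h, t ∈ U. Let r = {m(e, u) | isList u and mem e u} and r₊ = r ∪ {m(e, u) | ¬ isList u}. Then r ⊆ M_M ⊆ r₊, i.e. the program M is correct and complete w.r.t. the approximate specification (r, r₊). -/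
/-- The Herbrand universe of a language with `nil`, binary `cons`, and additional
constants indexed by `K`. -/
inductive U (K : Type*) where
  | nil : U K
  | cons : U K → U K → U K
  | const : K → U K

/-- `isList u` holds iff `u` is a list `[e₁, …, e_n]`. -/
inductive isList {K : Type*} : U K → Prop
  | nil : isList U.nil
  | cons (h t : U K) : isList t → isList (U.cons h t)

/-- `Mem e u`: `e` is a member of `u`; it holds for `u = cons h t` iff `e = h` or
`Mem e t`, and never holds otherwise. -/
inductive Mem {K : Type*} (e : U K) : U K → Prop
  | head (t : U K) : Mem e (U.cons e t)
  | tail (h t : U K) : Mem e t → Mem e (U.cons h t)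

/-- The ground instantiation of the list membership program
`{ m(E,[E|_]).  m(E,[_|T]) ← m(E,T). }`; an atom `m(e,u)` is the pair `(e,u)`. -/
def MemProg (K : Type*) : Set ((U K × U K) × Finset (U K × U K)) :=
  {cl | ∃ e t, cl = ((e, U.cons e t), ∅)} ∪
  {cl | ∃ e h t, cl = ((e, U.cons h t), {(e, t)})}

/-- Examples 1 and 2 of the paper: the membership program is correct and complete
w.r.t. the approximate specification `(r, r₊)`, i.e. `r ⊆ M_M ⊆ r₊`. -/
theorem memProg_fully_correct (K : Type*) :
    {a : U K × U K | isList a.2 ∧ Mem a.1 a.2} ⊆ leastModel (MemProg K) ∧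
    leastModel (MemProg K) ⊆
      {a : U K × U K | isList a.2 ∧ Mem a.1 a.2} ∪ {a : U K × U K | ¬ isList a.2} := by
  constructor
  · rintro ⟨e, u⟩ ⟨hl, hm⟩
    simp only [Set.mem_setOf_eq] at *
    induction hm with
    | head t =>
        rw [leastModel, ← OrderHom.map_lfp (Tq (MemProg K))]
        exact ⟨∅, Or.inl ⟨e, t, rfl⟩, by simp⟩
    | tail h t hmt ih =>
        cases hl with
        | cons _ _ hlt =>
          rw [leastModel, ← OrderHom.map_lfp (Tq (MemProg K))]
          refine ⟨{(e, t)}, Or.inr ⟨e, h, t, rfl⟩, ?_⟩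
          intro x hx
          simp only [Finset.coe_singleton, Set.mem_singleton_iff] at hx
          subst hx
          exact ih hlt
  · have : Tq (MemProg K) ({a : U K × U K | isList a.2 ∧ Mem a.1 a.2} ∪
        {a : U K × U K | ¬ isList a.2}) ⊆
        {a : U K × U K | isList a.2 ∧ Mem a.1 a.2} ∪ {a : U K × U K | ¬ isList a.2} := by
      rintro ⟨e, u⟩ ⟨pos, hcl, hsub⟩
      rcases hcl with ⟨e', t, heq⟩ | ⟨e', h, t, heq⟩
      · obtain ⟨h1, h2⟩ := Prod.mk.injEq .. ▸ heq
        injection h1 with he hu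
        subst he; subst hu
        by_cases hl : isList t
        · exact Or.inl ⟨isList.cons _ _ hl, Mem.head t⟩
        · exact Or.inr (fun hc => by cases hc; exact hl ‹_›)
      · obtain ⟨h1, h2⟩ := Prod.mk.injEq .. ▸ heq
        injection h1 with he hu
        subst he; subst hu; subst h2
        have hmem : ((e, t) : U K × U K) ∈ ({a : U K × U K | isList a.2 ∧ Mem a.1 a.2} ∪
            {a : U K × U K | ¬ isList a.2}) := hsub (by simp)
        rcases hmem with ⟨hlt, hmt⟩ | hnl
        · exact Or.inl ⟨isList.cons _ _ hlt, Mem.tail h t hmt⟩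
        · exact Or.inr (fun hc => by cases hc; exact hnl ‹_›)
    exact OrderHom.lfp_le _ this
end

section
/- Let U be the inductive type with constructors nil : U, cons : U → U → U, and const : K → U for an arbitrary index type K. Say u ∈ U is the list [e₁,…,e_n] if u = cons e₁ (cons e₂ (… (cons e_n nil)…)) (for n = 0, u = nil). Let the atom type be A = (U × U) ⊕ (U × U × U), writing atoms as mid(e, l) and mi(e, u, l). Define S_mid = {mid(e, l) | ∃ i ≥ 1, ∃ e₁,…,e_{2i−1} ∈ U, l is the list [e₁,…,e_{2i−1}] and e = e_i} and S_mi = {mi(e, u, l) | ∃ i ≥ 1, ∃ e₁,…,e_i, t ∈ U, u = cons e₁ (cons e₂ (… (cons e_i t)…)) with e = e_i, and ∃ f₁,…,f_{2i−1} ∈ U, l is the list [f₁,…,f_{2i−1}]}. Consider the ground positive program P consisting of: the clauses (mid(e, l), {mi(e, l, l)}) for all e, l ∈ U; the facts (mi(e, cons e t, cons f nil), ∅) for all e, t, f ∈ U; and the clauses (mi(e, cons h u, cons f₁ (cons f₂ l)), {mi(e, u, l)}) for all e, h, u, f₁, f₂, l ∈ U. Then the least Herbrand model of P equals S_mid ∪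 S_mi. -/
/-- `consAll [x₁,…,x_n] t = cons x₁ (cons x₂ ( … (cons x_n t) …))`. -/
def consAll {K : Type*} (xs : List (U K)) (t : U K) : U K := xs.foldr U.cons t

/-- The term representing the list `[x₁,…,x_n]`. -/
def listToU {K : Type*} (xs : List (U K)) : U K := consAll xs U.nil

/-- Atoms: `mid(e,l)` is `Sum.inl (e,l)`, and `mi(e,u,l)` is `Sum.inr (e,u,l)`. -/
abbrev MAtom (K : Type*) := (U K × U K) ⊕ (U K × U K × U K)

/-- `S_mid`: atoms `mid(e,l)` where `l` is a list `[e₁,…,e_{2i-1}]` (`i ≥ 1`) and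
`e = e_i` is its middle element. -/
def Smid (K : Type*) : Set (MAtom K) :=
  {a | ∃ (e : U K) (xs : List (U K)) (i : ℕ), 1 ≤ i ∧ xs.length = 2 * i - 1 ∧
    xs[i-1]? = some e ∧ a = Sum.inl (e, listToU xs)}

/-- `S_mi`: atoms `mi(e,u,l)` where `u = cons e₁ (… (cons e_i t) …)` with `e = e_i`
(`i ≥ 1`) and `l` is a list of length `2i-1`. -/
def Smi (K : Type*) : Set (MAtom K) :=
  {a | ∃ (e t : U K) (xs ys : List (U K)) (i : ℕ), 1 ≤ i ∧ xs.length = i ∧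
    xs[i-1]? = some e ∧ ys.length = 2 * i - 1 ∧
    a = Sum.inr (e, consAll xs t, listToU ys)}

/-- The ground instantiation of the middle-element program
`{ mid(E,L) ← mi(E,L,L).  mi(E,[E|_],[_]).  mi(E,[_|U],[_,_|L]) ← mi(E,U,L). }`. -/
def MidProg (K : Type*) : Set (MAtom K × Finset (MAtom K)) :=
  {cl | ∃ e l, cl = (Sum.inl (e, l), {Sum.inr (e, l, l)})} ∪
  {cl | ∃ e t f, cl = (Sum.inr (e, U.cons e t, U.cons f U.nil), ∅)} ∪
  {cl | ∃ e h u f₁ f₂ l,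
    cl = (Sum.inr (e, U.cons h u, U.cons f₁ (U.cons f₂ l)), {Sum.inr (e, u, l)})}

section Aux
variable {K : Type*}

lemma consAll_cons (x : U K) (xs : List (U K)) (t : U K) :
    consAll (x :: xs) t = U.cons x (consAll xs t) := rfl

lemma consAll_append (xs ys : List (U K)) (t : U K) :
    consAll (xs ++ ys) t = consAll xs (consAll ys t) := by
  simp [consAll, List.foldr_append]

lemma consAll_inj : ∀ (xs ys : List (U K)) (t s : U K),
    xs.length ≤ ys.length → consAll xs t = consAll ys s →
    xs = ys.take xs.length ∧ t = consAll (ys.drop xs.length) s := by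
  intro xs
  induction xs with
  | nil => intro ys t s _ h; simpa [consAll] using h
  | cons x xs ih =>
    intro ys t s hlen h
    cases ys with
    | nil => simp at hlen
    | cons y ys =>
      rw [consAll_cons, consAll_cons, U.cons.injEq] at h
      obtain ⟨rfl, h2⟩ := h
      obtain ⟨h3, h4⟩ := ih ys t s (by simpa using hlen) h2
      constructor
      · rw [List.length_cons, List.take_succ_cons, ← h3]
      · rw [List.length_cons, List.drop_succ_cons, ← h4]

lemma smi_subset_lfp : Smi K ⊆ leastModel (MidProg K) := by
  intro a ha
  obtain ⟨e, t, xs, ys, i, hi, hxs, hget, hys, rfl⟩ := ha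
  induction i generalizing xs ys with
  | zero => omega
  | succ i ih =>
    rw [leastModel, ← OrderHom.map_lfp]
    cases xs with
    | nil => rw [List.length_nil] at hxs; omega
    | cons x xs =>
    cases ys with
    | nil => rw [List.length_nil] at hys; omega
    | cons f₁ ys =>
    have hxs' : xs.length = i := by
      rw [List.length_cons] at hxs; omega
    rcases Nat.eq_zero_or_pos i with rfl | hipos
    · -- base case i = 1
      have hys0 : ys = [] := List.length_eq_zero_iff.mp (by
        rw [List.length_cons] at hys; omega)
      subst hys0
      have hxs0 : xs = [] := List.length_eq_zero_iff.mp hxs'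
      subst hxs0
      have hx : x = e := by
        have h0 : (0:ℕ) + 1 - 1 = 0 := rfl
        rw [h0, List.getElem?_cons_zero, Option.some.injEq] at hget
        exact hget
      subst hx
      exact ⟨∅, Or.inl (Or.inr ⟨x, t, f₁, rfl⟩), by simp⟩
    · -- inductive step
      cases ys with
      | nil => rw [List.length_cons, List.length_nil] at hys; omega
      | cons f₂ ys =>
      have hys' : ys.length = 2 * i - 1 := by
        rw [List.length_cons, List.length_cons] at hys; omega
      have hget' : xs[i-1]? = some e := by
        have h11 : i + 1 - 1 = (i - 1) + 1 := by omega
        rw [h11, List.getElem?_cons_succ] at hget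
        exact hget
      have hmem := ih xs ys hipos hxs' hget' hys'
      exact ⟨{Sum.inr (e, consAll xs t, listToU ys)},
        Or.inr ⟨e, x, consAll xs t, f₁, f₂, listToU ys, rfl⟩,
        by simpa [leastModel] using hmem⟩

theorem midProg_fully_correct' (K : Type*) :
    leastModel (MidProg K) = Smid K ∪ Smi K := by
  apply le_antisymm
  · -- lfp ≤ S since S is prefixed
    apply OrderHom.lfp_le
    rintro a ⟨pos, hcl, hsub⟩
    rcases hcl with (⟨e, l, heq⟩ | ⟨e, t, f, heq⟩) | ⟨e, h, u, f₁, f₂, l, heq⟩ <;>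
      rw [Prod.mk.injEq] at heq
    · -- mid clause
      obtain ⟨rfl, rfl⟩ := heq
      have hb : (Sum.inr (e, l, l) : MAtom K) ∈ Smid K ∪ Smi K := by
        apply hsub; simp
      rcases hb with hb | hb
      · obtain ⟨_, _, _, _, _, _, h⟩ := hb; simp at h
      · obtain ⟨e', t, xs, ys, i, hi, hxs, hget, hys, heq2⟩ := hb
        rw [Sum.inr.injEq, Prod.mk.injEq, Prod.mk.injEq] at heq2
        obtain ⟨rfl, h1, h2⟩ := heq2
        have hlen : xs.length ≤ ys.length := by omega
        obtain ⟨hxs2, _⟩ := consAll_inj xs ys t U.nil hlen (by rw [← h1, h2]; rfl)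
        left
        refine ⟨e, ys, i, hi, hys, ?_, by rw [h2]⟩
        have hh : ys[i-1]? = xs[i-1]? := by
          rw [hxs2, hxs, List.getElem?_take, if_pos (by omega)]
        rw [hh, hget]
    · -- fact
      obtain ⟨rfl, rfl⟩ := heq
      right
      exact ⟨e, t, [e], [f], 1, le_refl 1, rfl, rfl, rfl, rfl⟩
    · -- recursive mi clause
      obtain ⟨rfl, rfl⟩ := heq
      have hb : (Sum.inr (e, u, l) : MAtom K) ∈ Smid K ∪ Smi K := by
        apply hsub; simp
      rcases hb with hb | hb
      · obtain ⟨_, _, _, _, _, _, h'⟩ := hb; simp at h'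
      · obtain ⟨e', t, xs, ys, i, hi, hxs, hget, hys, heq2⟩ := hb
        rw [Sum.inr.injEq, Prod.mk.injEq, Prod.mk.injEq] at heq2
        obtain ⟨rfl, h1, h2⟩ := heq2
        right
        refine ⟨e, t, h :: xs, f₁ :: f₂ :: ys, i + 1, by omega, by simp [hxs], ?_,
          by simp [hys]; omega, ?_⟩
        · have h11 : i + 1 - 1 = (i - 1) + 1 := by omega
          rw [h11, List.getElem?_cons_succ]
          exact hget
        · rw [h1, h2]; rfl
  · rintro a (ha | ha)
    · obtain ⟨e, ys, i, hi, hys, hget, rfl⟩ := ha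
      rw [leastModel, ← OrderHom.map_lfp]
      refine ⟨{Sum.inr (e, listToU ys, listToU ys)},
        Or.inl (Or.inl ⟨e, listToU ys, rfl⟩), ?_⟩
      simp only [Finset.coe_singleton, Set.singleton_subset_iff]
      apply smi_subset_lfp
      refine ⟨e, consAll (ys.drop i) U.nil, ys.take i, ys, i, hi, ?_, ?_, hys, ?_⟩
      · simp; omega
      · rw [List.getElem?_take, if_pos (by omega)]; exact hget
      · rw [← consAll_append, List.take_append_drop]; rfl
    · exact smi_subset_lfp ha

end Aux

/-- Example 3 of the paper: the least Herbrand model of the middle-element program is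
exactly `S_mid ∪ S_mi`. -/
theorem midProg_fully_correct (K : Type*) :
    leastModel (MidProg K) = Smid K ∪ Smi K :=
  midProg_fully_correct' K
end

section
/- Let V be a finite type (the positions of a two-person game) and mov : V → V → Prop a relation (the possible moves). On pairs (L, W) of subsets of V, the operator G(L, W) = ({u | ∀ v, mov u v → v ∈ W}, {u | ∃ v, mov u v ∧ v ∈ L}) is monotone for the componentwise inclusion order; let (L*, W*) be its least fixed point (the losing and winning positions). Let the atom type be A = (V × V) ⊕ V, writing atoms as mv(u, v) and w(u). Consider the ground normal program WIN consisting of: the facts (mv(u, v), ∅, ∅) for all u, v ∈ V with mov u v, and the clauses (w(u), {mv(u, v)}, {w(v)}) for all u, v ∈ V. Then for every u ∈ V: w(u) ∈ lfp(Γ_WIN²) if and only if u ∈ W*, and w(u) ∉ gfp(Γ_WIN²) if and only if u ∈ L* (i.e. in the well-founded model of WIN, w(u) is true exactly for the winning positions and false exactly for the losing positions). -/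
/-- Atoms of the game program: `mv(u,v)` is `Sum.inl (u,v)` and `w(u)` is
`Sum.inr u`. -/
abbrev WAtom (V : Type*) := (V × V) ⊕ V

/-- The ground instantiation of the program `{ w(U) ← mov(U,V), ¬w(V). }` together
with the move facts. -/
def WIN {V : Type*} (mov : V → V → Prop) :
    Set (WAtom V × Finset (WAtom V) × Finset (WAtom V)) :=
  {cl | ∃ u v, mov u v ∧ cl = (Sum.inl (u, v), ∅, ∅)} ∪
  {cl | ∃ u v, cl = (Sum.inr u, {Sum.inl (u, v)}, {Sum.inr v})}

/-- The operator computing the losing and winning positions of the game: a position is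
losing if every move from it leads to a winning one, and winning if some move from it
leads to a losing one. -/
def gameOp {V : Type*} (mov : V → V → Prop) (LW : Set V × Set V) : Set V × Set V :=
  ({u | ∀ v, mov u v → v ∈ LW.2}, {u | ∃ v, mov u v ∧ v ∈ LW.1})

section AuxWIN

variable {V : Type*} (mov : V → V → Prop)

/-- `g L.W. : positions all of whose successors are in W`. -/
private def gOp : Set V →o Set V where
  toFun W := {u | ∀ v, mov u v → v ∈ W}
  monotone' := fun _ _ h _ hu v hv => h (hu v hv)

private def hOp : Set V →o Set V where
  toFun L := {u | ∃ v, mov u v ∧ v ∈ L}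
  monotone' := fun _ _ h _ ⟨v, hv, hvL⟩ => ⟨v, hv, h hvL⟩

private def fOp : Set V →o Set V := (hOp mov).comp (gOp mov)

private def mvSet : Set (WAtom V) := {a | ∃ u v, mov u v ∧ a = Sum.inl (u, v)}

private def emb (W : Set V) : Set (WAtom V) := mvSet mov ∪ Sum.inr '' W

private lemma inr_mem_emb {W : Set V} {u : V} :
    (Sum.inr u : WAtom V) ∈ emb mov W ↔ u ∈ W := by
  constructor
  · rintro (⟨a, b, _, h⟩ | ⟨x, hx, h⟩)
    · exact absurd h (by simp)
    · cases Sum.inr_injective h; exact hx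
  · intro h; exact Or.inr ⟨u, h, rfl⟩

private lemma emb_inj {W W' : Set V} (h : emb mov W = emb mov W') : W = W' := by
  ext u
  rw [← inr_mem_emb mov, h, inr_mem_emb]

private lemma gamma_WIN_eq (I : Set (WAtom V)) :
    gamma (WIN mov) I = emb mov {u | ∃ v, mov u v ∧ (Sum.inr v : WAtom V) ∉ I} := by
  apply le_antisymm
  · apply OrderHom.lfp_le
    rintro a ⟨pos, ⟨neg, hm, hneg⟩, hs⟩
    rcases hm with ⟨u, v, huv, hc⟩ | ⟨u, v, hc⟩
    · obtain ⟨rfl, rfl, rfl⟩ := Prod.mk.injEq .. ▸ (by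
        injection hc with h1 h2; injection h2 with h3 h4
        exact ⟨h1, h3, h4⟩ : a = Sum.inl (u, v) ∧ pos = ∅ ∧ neg = ∅)
      exact Or.inl ⟨u, v, huv, rfl⟩
    · obtain ⟨rfl, rfl, rfl⟩ := (by
        injection hc with h1 h2; injection h2 with h3 h4
        exact ⟨h1, h3, h4⟩ : a = Sum.inr u ∧ pos = {Sum.inl (u, v)} ∧
          neg = {Sum.inr v})
      have hmem : (Sum.inl (u, v) : WAtom V) ∈ emb mov
          {u | ∃ v, mov u v ∧ (Sum.inr v : WAtom V) ∉ I} := by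
        apply hs; simp
      have huv : mov u v := by
        rcases hmem with ⟨a, b, hab, h⟩ | ⟨x, _, h⟩
        · injection h with h'; injection h' with h1 h2; subst h1; subst h2; exact hab
        · exact absurd h (by simp)
      have hvI : (Sum.inr v : WAtom V) ∉ I := by
        intro hvI
        have : (Sum.inr v : WAtom V) ∈ (↑({Sum.inr v} : Finset (WAtom V)) ∩ I : Set (WAtom V)) := by
          simp [hvI]
        rw [hneg] at this
        exact this
      exact Or.inr ⟨u, ⟨v, huv, hvI⟩, rfl⟩
  · have hfix := OrderHom.map_lfp (Tq (reduct (WIN mov) I))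
    have hmv : ∀ u v : V, mov u v →
        (Sum.inl (u, v) : WAtom V) ∈ gamma (WIN mov) I := by
      intro u v huv
      have : (Sum.inl (u, v) : WAtom V) ∈
          Tq (reduct (WIN mov) I) (gamma (WIN mov) I) := by
        refine ⟨∅, ⟨∅, Or.inl ⟨u, v, huv, rfl⟩, by simp⟩, by simp⟩
      rwa [show Tq (reduct (WIN mov) I) (gamma (WIN mov) I) = gamma (WIN mov) I
        from hfix] at this
    rintro a (⟨u, v, huv, rfl⟩ | ⟨u, ⟨v, huv, hvI⟩, rfl⟩)
    · exact hmv u v huv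
    · have : (Sum.inr u : WAtom V) ∈
          Tq (reduct (WIN mov) I) (gamma (WIN mov) I) := by
        refine ⟨{Sum.inl (u, v)}, ⟨{Sum.inr v}, Or.inr ⟨u, v, rfl⟩, ?_⟩, ?_⟩
        · ext a; simp only [Finset.coe_singleton, Set.mem_inter_iff,
            Set.mem_singleton_iff, Set.mem_empty_iff_false, iff_false, not_and]
          rintro rfl; exact hvI
        · intro a ha
          simp only [Finset.coe_singleton, Set.mem_singleton_iff] at ha
          subst ha; exact hmv u v huv
      rwa [show Tq (reduct (WIN mov) I) (gamma (WIN mov) I) = gamma (WIN mov) I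
        from hfix] at this

private lemma gammaSq_WIN_eq (I : Set (WAtom V)) :
    gammaSq (WIN mov) I = emb mov (fOp mov {u | (Sum.inr u : WAtom V) ∈ I}) := by
  show gamma (WIN mov) (gamma (WIN mov) I) = _
  rw [gamma_WIN_eq, gamma_WIN_eq]
  refine congrArg (emb mov) ?_
  ext u
  simp only [Set.mem_setOf_eq, inr_mem_emb]
  constructor
  · rintro ⟨v, huv, hv⟩
    refine ⟨v, huv, fun w hvw => ?_⟩
    by_contra hw
    exact hv ⟨w, hvw, hw⟩
  · rintro ⟨v, huv, hv⟩
    refine ⟨v, huv, ?_⟩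
    rintro ⟨w, hvw, hw⟩
    exact hw (hv w hvw)

private lemma gammaSq_emb (W : Set V) :
    gammaSq (WIN mov) (emb mov W) = emb mov (fOp mov W) := by
  rw [gammaSq_WIN_eq]
  refine congrArg (emb mov) (congrArg (fOp mov) ?_)
  ext u
  exact inr_mem_emb mov

private lemma lfp_gammaSq_eq :
    OrderHom.lfp (gammaSq (WIN mov)) = emb mov (OrderHom.lfp (fOp mov)) := by
  apply le_antisymm
  · apply OrderHom.lfp_le_fixed
    rw [gammaSq_emb, OrderHom.map_lfp]
  · have hfix := OrderHom.map_lfp (gammaSq (WIN mov))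
    set W0 := fOp mov {u | (Sum.inr u : WAtom V) ∈ OrderHom.lfp (gammaSq (WIN mov))}
    have hW0 : OrderHom.lfp (gammaSq (WIN mov)) = emb mov W0 := by
      rw [← hfix, gammaSq_WIN_eq]
    have hfixW0 : fOp mov W0 = W0 := by
      apply emb_inj mov
      rw [← gammaSq_emb, ← hW0, hfix, hW0]
    rw [hW0]
    exact Set.union_subset_union_right _
      (Set.image_mono (OrderHom.lfp_le_fixed _ hfixW0))

private lemma gfp_gammaSq_eq :
    OrderHom.gfp (gammaSq (WIN mov)) = emb mov (OrderHom.gfp (fOp mov)) := by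
  apply le_antisymm
  · have hfix := OrderHom.map_gfp (gammaSq (WIN mov))
    set W0 := fOp mov {u | (Sum.inr u : WAtom V) ∈ OrderHom.gfp (gammaSq (WIN mov))}
    have hW0 : OrderHom.gfp (gammaSq (WIN mov)) = emb mov W0 := by
      rw [← hfix, gammaSq_WIN_eq]
    have hfixW0 : fOp mov W0 = W0 := by
      apply emb_inj mov
      rw [← gammaSq_emb, ← hW0, hfix, hW0]
    rw [hW0]
    exact Set.union_subset_union_right _
      (Set.image_mono ((fOp mov).le_gfp (le_of_eq hfixW0.symm)))
  · apply OrderHom.le_gfp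
    rw [gammaSq_emb, OrderHom.map_gfp]

/-- Duality: `gfp f = (lfp d)ᶜ` where `d W = (f Wᶜ)ᶜ`. -/
private lemma gfp_compl_lfp (f d : Set V →o Set V)
    (hd : ∀ W, d W = (f Wᶜ)ᶜ) :
    OrderHom.gfp f = (OrderHom.lfp d)ᶜ := by
  apply le_antisymm
  · rw [← compl_compl (OrderHom.gfp f)]
    apply compl_le_compl
    apply OrderHom.lfp_le_fixed
    rw [hd, compl_compl, OrderHom.map_gfp]
  · apply f.le_gfp
    have hcompl : (OrderHom.lfp d)ᶜ = f ((OrderHom.lfp d)ᶜ) := by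
      conv_lhs => rw [← OrderHom.map_lfp d]
      rw [hd, compl_compl]
    exact le_of_eq hcompl

/-- Rolling rule: `g (lfp (h ∘ g)) = lfp (g ∘ h)`. -/
private lemma rolling (g h : Set V →o Set V) :
    g (OrderHom.lfp (h.comp g)) = OrderHom.lfp (g.comp h) := by
  apply le_antisymm
  · have h1 : OrderHom.lfp (h.comp g) ≤ h (OrderHom.lfp (g.comp h)) := by
      apply OrderHom.lfp_le_fixed
      show h (g (h (OrderHom.lfp (g.comp h)))) = _
      rw [show g (h (OrderHom.lfp (g.comp h))) = OrderHom.lfp (g.comp h) from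
        OrderHom.map_lfp (g.comp h)]
    calc g (OrderHom.lfp (h.comp g)) ≤ g (h (OrderHom.lfp (g.comp h))) := g.monotone h1
    _ = OrderHom.lfp (g.comp h) := OrderHom.map_lfp (g.comp h)
  · apply OrderHom.lfp_le_fixed
    show g (h (g (OrderHom.lfp (h.comp g)))) = _
    rw [show h (g (OrderHom.lfp (h.comp g))) = OrderHom.lfp (h.comp g) from
      OrderHom.map_lfp (h.comp g)]

end AuxWIN

/-- Example 4 of the paper's supplementary material: `gameOp` is monotone; and if
`(L*, W*)` is its least fixed point, then in the well-founded model of `WIN` the atom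
`w(u)` is true (`w(u) ∈ lfp (Γ²)`) exactly for the winning positions `u ∈ W*` and
false (`w(u) ∉ gfp (Γ²)`) exactly for the losing positions `u ∈ L*`. -/
theorem WIN_correct_complete {V : Type*} [Fintype V] (mov : V → V → Prop)
    (LW : Set V × Set V) (hLW : IsLeast {x | gameOp mov x = x} LW) :
    Monotone (gameOp mov) ∧
    ∀ u : V,
      ((Sum.inr u : WAtom V) ∈ OrderHom.lfp (gammaSq (WIN mov)) ↔ u ∈ LW.2) ∧
      ((Sum.inr u : WAtom V) ∉ OrderHom.gfp (gammaSq (WIN mov)) ↔ u ∈ LW.1) := by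
  constructor
  · -- monotonicity of gameOp
    intro x y hxy
    constructor
    · intro u hu v hv
      exact hxy.2 (hu v hv)
    · rintro u ⟨v, huv, hv⟩
      exact ⟨v, huv, hxy.1 hv⟩
  · -- identify LW with fixed points of fOp
    have hfix : gameOp mov LW = LW := hLW.1
    have h1 : LW.1 = gOp mov LW.2 := congrArg Prod.fst hfix.symm
    have h2 : LW.2 = hOp mov LW.1 := congrArg Prod.snd hfix.symm
    have hW2fix : fOp mov LW.2 = LW.2 := by
      show hOp mov (gOp mov LW.2) = LW.2
      rw [← h1, ← h2]
    -- the pair (gOp (lfp fOp), lfp fOp) is a fixed point of gameOp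
    have hpair : gameOp mov (gOp mov (OrderHom.lfp (fOp mov)), OrderHom.lfp (fOp mov))
        = (gOp mov (OrderHom.lfp (fOp mov)), OrderHom.lfp (fOp mov)) := by
      show (gOp mov (OrderHom.lfp (fOp mov)),
        hOp mov (gOp mov (OrderHom.lfp (fOp mov)))) = _
      rw [show hOp mov (gOp mov (OrderHom.lfp (fOp mov))) = OrderHom.lfp (fOp mov)
        from OrderHom.map_lfp (fOp mov)]
    have hle := hLW.2 hpair
    have hW2 : LW.2 = OrderHom.lfp (fOp mov) :=
      le_antisymm hle.2 (OrderHom.lfp_le_fixed _ hW2fix)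
    have hL1 : LW.1 = gOp mov (OrderHom.lfp (fOp mov)) := by rw [h1, hW2]
    -- duality for gfp
    have hd : ∀ W : Set V, (gOp mov).comp (hOp mov) W = (fOp mov Wᶜ)ᶜ := by
      intro W
      ext u
      show (∀ v, mov u v → ∃ w, mov v w ∧ w ∈ W) ↔
        ¬ ∃ v, mov u v ∧ ∀ w, mov v w → w ∈ Wᶜ
      constructor
      · rintro h ⟨v, huv, hall⟩
        obtain ⟨w, hvw, hw⟩ := h v huv
        exact hall w hvw hw
      · intro h v huv
        by_contra hno
        push_neg at hno
        exact h ⟨v, huv, fun w hvw => hno w hvw⟩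
    have hgfp : OrderHom.gfp (fOp mov) = (OrderHom.lfp ((gOp mov).comp (hOp mov)))ᶜ :=
      gfp_compl_lfp (fOp mov) ((gOp mov).comp (hOp mov)) hd
    have hroll : gOp mov (OrderHom.lfp (fOp mov)) =
        OrderHom.lfp ((gOp mov).comp (hOp mov)) := rolling (gOp mov) (hOp mov)
    intro u
    constructor
    · rw [lfp_gammaSq_eq, inr_mem_emb, hW2]
    · rw [gfp_gammaSq_eq, inr_mem_emb, hgfp, hL1, hroll]
      simp [Set.mem_compl_iff]
end
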